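/- With the setting of the previous statement (Lie algebra elements e, f₃, f₂, f₁, f₀, h with [e,f₃]=f₂, [e,f₂]=f₁, [e,f₁]=f₀, [f₁,f₂]=6h, h and f₃ commuting with f₂, f₃, h and with each other, and [e,h]=[e,f₀]=0... as in type G_2), for all p, q ≥ 0 one has in U(g): e^{(p)} f₃^{(q)} ≡ Σ_i h^{(i)} f₃^{(q-p+i)} f₂^{(p-3i)} modulo the left ideal U(g)(ℂe + ℂf₀ + ℂf₁), where i ranges over max{0, p-q} ≤ i ≤ ⌊p/3⌋. -/

import Mathlib

open UniversalEnvelopingAlgebra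

section AuxStmt10
variable {R : Type*} [Ring R] [Algebra ℂ R]

-- E * F3^B with successor
lemma aux_EF3succ (E F3 F2 : R) (hEF3 : E * F3 = F3 * E + F2) (h32 : F2 * F3 = F3 * F2) :
    ∀ B : ℕ, E * F3 ^ (B + 1) = F3 ^ (B + 1) * E + ((B : ℂ) + 1) • (F3 ^ B * F2) := by
  intro B
  induction B with
  | zero => simpa using hEF3
  | succ B ih =>
    rw [pow_succ, ← mul_assoc, ih, add_mul, smul_mul_assoc, mul_assoc, hEF3,
      mul_assoc, h32, mul_add, ← mul_assoc, ← pow_succ, ← mul_assoc, ← pow_succ]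
    push_cast
    module

lemma aux_EF3 (E F3 F2 : R) (hEF3 : E * F3 = F3 * E + F2) (h32 : F2 * F3 = F3 * F2) :
    ∀ B : ℕ, E * F3 ^ B = F3 ^ B * E + (B : ℂ) • (F3 ^ (B - 1) * F2) := by
  intro B
  cases B with
  | zero => simp
  | succ B => simpa using aux_EF3succ E F3 F2 hEF3 h32 B

lemma aux_F1F2 (H F2 F1 : R) (h12 : F1 * F2 = F2 * F1 + (6:ℂ) • H) (hH2 : H * F2 = F2 * H) :
    ∀ C : ℕ, F1 * F2 ^ C = F2 ^ C * F1 + ((6:ℂ) * C) • (H * F2 ^ (C - 1)) := by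
  have succ : ∀ C : ℕ, F1 * F2 ^ (C + 1) = F2 ^ (C + 1) * F1 + ((6:ℂ) * (C + 1)) • (H * F2 ^ C) := by
    intro C
    induction C with
    | zero => simpa using h12
    | succ C ih =>
      have hcomm : F2 ^ (C + 1) * H = H * F2 ^ (C + 1) :=
        ((show Commute H F2 from hH2).pow_right (C+1)).eq.symm
      rw [pow_succ, ← mul_assoc, ih, add_mul, smul_mul_assoc, mul_assoc, h12, mul_add,
        ← mul_assoc, ← pow_succ, mul_assoc H, ← pow_succ, mul_smul_comm, hcomm]
      push_cast
      module
  intro C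
  cases C with
  | zero => simp
  | succ C => simpa using succ C

lemma aux_EF2 (E H F2 F1 : R) (hEF2 : E * F2 = F2 * E + F1)
    (h12 : F1 * F2 = F2 * F1 + (6:ℂ) • H) (hH2 : H * F2 = F2 * H) :
    ∀ C : ℕ, E * F2 ^ C = F2 ^ C * E + (C : ℂ) • (F2 ^ (C - 1) * F1)
      + ((3:ℂ) * C * ((C:ℂ) - 1)) • (H * F2 ^ (C - 2)) := by
  have succ : ∀ C : ℕ, E * F2 ^ (C + 2) = F2 ^ (C + 2) * E + ((C:ℂ) + 2) • (F2 ^ (C + 1) * F1)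
      + ((3:ℂ) * ((C:ℂ) + 2) * ((C:ℂ) + 1)) • (H * F2 ^ C) := by
    intro C
    induction C with
    | zero =>
      have h1 : E * F2 ^ 2 = (E * F2) * F2 := by rw [pow_two, mul_assoc]
      rw [h1, hEF2, add_mul, h12, mul_assoc, hEF2, mul_add, ← mul_assoc, ← pow_two]
      simp only [pow_zero, mul_one, Nat.cast_zero, zero_add, pow_one]
      norm_num
      module
    | succ C ih =>
      have hcomm : F2 ^ (C + 1) * H = H * F2 ^ (C + 1) :=
        ((show Commute H F2 from hH2).pow_right (C+1)).eq.symm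
      rw [show C + 1 + 2 = (C + 2) + 1 by ring, pow_succ, ← mul_assoc, ih, add_mul, add_mul,
        smul_mul_assoc, smul_mul_assoc, mul_assoc, hEF2, mul_add, ← mul_assoc, ← pow_succ,
        mul_assoc _ F1 F2, h12, mul_add, ← mul_assoc, ← pow_succ,
        mul_assoc H, ← pow_succ, mul_smul_comm, hcomm]
      push_cast
      module
  intro C
  match C with
  | 0 => simp
  | 1 => rw [pow_one, hEF2]; norm_num
  | (C + 2) =>
    rw [succ C]
    push_cast
    module

noncomputable def gterm (H F3 F2 : R) (q p A : ℕ) : R :=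
  if 3*A ≤ p ∧ p ≤ q + A then
    (((A.factorial * (q+A-p).factorial * (p-3*A).factorial : ℕ) : ℂ))⁻¹ •
      (H^A * F3^(q+A-p) * F2^(p-3*A))
  else 0

lemma aux_ML (E H F3 F2 F1 : R)
    (hEF3 : E * F3 = F3 * E + F2) (hEF2 : E * F2 = F2 * E + F1)
    (hEH : E * H = H * E)
    (h12 : F1 * F2 = F2 * F1 + (6:ℂ) • H)
    (hH2 : H * F2 = F2 * H) (hH3 : H * F3 = F3 * H) (h32 : F2 * F3 = F3 * F2)
    (A B C : ℕ) :
    E * (H ^ A * F3 ^ B * F2 ^ C)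
      = (H ^ A * F3 ^ B * F2 ^ C) * E
        + (C : ℂ) • (H ^ A * F3 ^ B * F2 ^ (C - 1) * F1)
        + ((3:ℂ) * C * ((C:ℂ) - 1)) • (H ^ (A + 1) * F3 ^ B * F2 ^ (C - 2))
        + (B : ℂ) • (H ^ A * F3 ^ (B - 1) * F2 ^ (C + 1)) := by
  have cEH : E * H ^ A = H ^ A * E := ((show Commute E H from hEH).pow_right A).eq
  have cH3 : H * F3 ^ B = F3 ^ B * H := ((show Commute H F3 from hH3).pow_right B).eq
  have t1eq : H ^ A * F3 ^ B * (F2 ^ C * E) = H ^ A * F3 ^ B * F2 ^ C * E := by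
    rw [← mul_assoc]
  have t2eq : H ^ A * F3 ^ B * (F2 ^ (C-1) * F1) = H ^ A * F3 ^ B * F2 ^ (C-1) * F1 := by
    rw [← mul_assoc]
  have t3eq : H ^ A * F3 ^ B * (H * F2 ^ (C-2)) = H ^ (A+1) * F3 ^ B * F2 ^ (C-2) := by
    rw [← mul_assoc, mul_assoc (H^A), ← cH3, ← mul_assoc, ← pow_succ]
  calc E * (H ^ A * F3 ^ B * F2 ^ C)
      = H ^ A * (E * F3 ^ B) * F2 ^ C := by
        rw [← mul_assoc, ← mul_assoc, cEH, mul_assoc (H^A) E (F3^B)]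
    _ = H ^ A * (F3 ^ B * E + (B:ℂ) • (F3 ^ (B-1) * F2)) * F2 ^ C := by
        rw [aux_EF3 E F3 F2 hEF3 h32 B]
    _ = H ^ A * F3 ^ B * (E * F2 ^ C) + (B:ℂ) • (H ^ A * F3 ^ (B-1) * F2 ^ (C+1)) := by
        rw [mul_add, add_mul, mul_smul_comm, smul_mul_assoc, ← mul_assoc (H^A) (F3^B) E,
          mul_assoc (H^A * F3^B), mul_assoc (H^A) (F3^(B-1) * F2) (F2^C),
          mul_assoc (F3^(B-1)) F2 (F2^C), ← pow_succ', ← mul_assoc (H^A) (F3^(B-1)) (F2^(C+1))]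
    _ = H ^ A * F3 ^ B * (F2 ^ C * E + (C:ℂ) • (F2 ^ (C-1) * F1)
          + ((3:ℂ) * C * ((C:ℂ) - 1)) • (H * F2 ^ (C-2)))
        + (B:ℂ) • (H ^ A * F3 ^ (B-1) * F2 ^ (C+1)) := by
        rw [aux_EF2 E H F2 F1 hEF2 h12 hH2 C]
    _ = _ := by
        rw [mul_add, mul_add, mul_smul_comm, mul_smul_comm, t1eq, t2eq, t3eq]

lemma fac_ne (n : ℕ) : ((n.factorial : ℕ) : ℂ) ≠ 0 :=
  Nat.cast_ne_zero.mpr (Nat.factorial_ne_zero n)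

lemma fac3_ne (a b c : ℕ) : ((a.factorial * b.factorial * c.factorial : ℕ) : ℂ) ≠ 0 :=
  Nat.cast_ne_zero.mpr
    (Nat.mul_ne_zero (Nat.mul_ne_zero (Nat.factorial_ne_zero a) (Nat.factorial_ne_zero b))
      (Nat.factorial_ne_zero c))

lemma aux_step (E H F3 F2 F1 : R)
    (hEF3 : E * F3 = F3 * E + F2) (hEF2 : E * F2 = F2 * E + F1)
    (hEH : E * H = H * E)
    (h12 : F1 * F2 = F2 * F1 + (6:ℂ) • H)
    (hH2 : H * F2 = F2 * H) (hH3 : H * F3 = F3 * H) (h32 : F2 * F3 = F3 * F2)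
    (I : Submodule R R) (hIE : ∀ u : R, u * E ∈ I) (hIF1 : ∀ u : R, u * F1 ∈ I)
    (hIs : ∀ (c : ℂ), ∀ x ∈ I, c • x ∈ I)
    (q p A : ℕ) :
    E * gterm H F3 F2 q p A - ((p+1-3*A : ℕ) : ℂ) • gterm H F3 F2 q (p+1) A
      - ((3*(A+1) : ℕ) : ℂ) • gterm H F3 F2 q (p+1) (A+1) ∈ I := by
  by_cases hg : 3*A ≤ p ∧ p ≤ q + A
  · obtain ⟨h3A, hpq⟩ := hg
    set B := q + A - p with hB
    set C := p - 3*A with hC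
    set coef : ℂ := (((A.factorial * B.factorial * C.factorial : ℕ) : ℂ))⁻¹ with hcoef
    have hgp : gterm H F3 F2 q p A = coef • (H^A * F3^B * F2^C) := by
      rw [gterm, if_pos ⟨h3A, hpq⟩]
    -- key identity for the two surviving terms
    have k1 : (coef * B) • (H ^ A * F3 ^ (B - 1) * F2 ^ (C + 1))
        = ((p+1-3*A : ℕ) : ℂ) • gterm H F3 F2 q (p+1) A := by
      by_cases hB1 : p + 1 ≤ q + A
      · have hBpos : ∃ b, B = b + 1 := ⟨q + A - p - 1, by omega⟩
        obtain ⟨b, hb⟩ := hBpos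
        have e1 : q + A - (p+1) = b := by omega
        have e2 : p + 1 - 3*A = C + 1 := by omega
        rw [gterm, if_pos ⟨by omega, hB1⟩, e1, e2, smul_smul, hb]
        have e3 : b + 1 - 1 = b := by omega
        rw [e3]
        congr 1
        rw [hcoef, hb, inv_mul_eq_div, ← div_eq_mul_inv,
          div_eq_div_iff (fac3_ne A (b+1) C) (fac3_ne A b (C+1))]
        have key : (b+1) * (A.factorial * b.factorial * (C+1).factorial)
            = (C+1) * (A.factorial * (b+1).factorial * C.factorial) := by
          simp only [Nat.factorial_succ]; ring
        exact_mod_cast key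
      · have hB0 : B = 0 := by omega
        rw [gterm, if_neg (by tauto), smul_zero, hB0]
        norm_num
    have k2 : (coef * ((3:ℂ) * C * ((C:ℂ) - 1))) • (H ^ (A + 1) * F3 ^ B * F2 ^ (C - 2))
        = ((3*(A+1) : ℕ) : ℂ) • gterm H F3 F2 q (p+1) (A+1) := by
      by_cases hC2 : 3*(A+1) ≤ p + 1
      · have hCpos : ∃ c, C = c + 2 := ⟨p - 3*A - 2, by omega⟩
        obtain ⟨c, hc⟩ := hCpos
        have e1 : q + (A+1) - (p+1) = B := by omega
        have e2 : p + 1 - 3*(A+1) = c := by omega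
        rw [gterm, if_pos ⟨hC2, by omega⟩, e1, e2, smul_smul, hc]
        have e3 : c + 2 - 2 = c := by omega
        rw [e3]
        congr 1
        rw [hcoef, hc, show ((c+2:ℕ):ℂ) - 1 = ((c+1:ℕ):ℂ) by push_cast; ring,
          inv_mul_eq_div, ← div_eq_mul_inv,
          div_eq_div_iff (fac3_ne A B (c+2)) (fac3_ne (A+1) B c)]
        have key : (3 * (c+2) * (c+1)) * ((A+1).factorial * B.factorial * c.factorial)
            = (3*(A+1)) * (A.factorial * B.factorial * (c+2).factorial) := by
          simp only [Nat.factorial_succ]; ring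
        exact_mod_cast key
      · have hC01 : C = 0 ∨ C = 1 := by omega
        rw [gterm, if_neg (by tauto), smul_zero]
        rcases hC01 with h | h <;> rw [h] <;> norm_num
    -- put it together
    rw [hgp, mul_smul_comm, aux_ML E H F3 F2 F1 hEF3 hEF2 hEH h12 hH2 hH3 h32 A B C,
      smul_add, smul_add, smul_add, smul_smul, smul_smul, smul_smul, k1, k2]
    have : coef • (H ^ A * F3 ^ B * F2 ^ C * E) + (coef * ↑C) • (H ^ A * F3 ^ B * F2 ^ (C - 1) * F1) +
          ((3 * (A + 1) : ℕ) : ℂ) • gterm H F3 F2 q (p + 1) (A + 1) +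
          ((p + 1 - 3 * A : ℕ) : ℂ) • gterm H F3 F2 q (p + 1) A -
          ((p + 1 - 3 * A : ℕ) : ℂ) • gterm H F3 F2 q (p + 1) A -
          ((3 * (A + 1) : ℕ) : ℂ) • gterm H F3 F2 q (p + 1) (A + 1)
        = coef • (H ^ A * F3 ^ B * F2 ^ C * E) + (coef * ↑C) • (H ^ A * F3 ^ B * F2 ^ (C - 1) * F1) := by
      abel
    rw [show coef • (H ^ A * F3 ^ B * F2 ^ C * E) + (coef * ↑C) • (H ^ A * F3 ^ B * F2 ^ (C - 1) * F1) +
          ((3 * (A + 1) : ℕ) : ℂ) • gterm H F3 F2 q (p + 1) (A + 1) +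
          ((p + 1 - 3 * A : ℕ) : ℂ) • gterm H F3 F2 q (p + 1) A -
          ((p + 1 - 3 * A : ℕ) : ℂ) • gterm H F3 F2 q (p + 1) A -
          ((3 * (A + 1) : ℕ) : ℂ) • gterm H F3 F2 q (p + 1) (A + 1)
        = coef • (H ^ A * F3 ^ B * F2 ^ C * E) + (coef * ↑C) • (H ^ A * F3 ^ B * F2 ^ (C - 1) * F1)
      from this]
    exact I.add_mem (hIs _ _ (hIE _)) (hIs _ _ (hIF1 _))
  · have hg0 : gterm H F3 F2 q p A = 0 := by rw [gterm, if_neg hg]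
    have hg2 : gterm H F3 F2 q (p+1) (A+1) = 0 := by
      rw [gterm, if_neg]
      rintro ⟨ha, hb⟩
      exact hg ⟨by omega, by omega⟩
    have hg1 : ((p+1-3*A : ℕ) : ℂ) • gterm H F3 F2 q (p+1) A = 0 := by
      by_cases hA : 3*A ≤ p + 1 ∧ p + 1 ≤ q + A
      · have : p + 1 - 3*A = 0 := by omega
        rw [this]; norm_num
      · rw [gterm, if_neg hA, smul_zero]
    rw [hg0, hg2, hg1, mul_zero, smul_zero]
    simpa using I.zero_mem

lemma aux_main (E H F3 F2 F1 : R)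
    (hEF3 : E * F3 = F3 * E + F2) (hEF2 : E * F2 = F2 * E + F1)
    (hEH : E * H = H * E)
    (h12 : F1 * F2 = F2 * F1 + (6:ℂ) • H)
    (hH2 : H * F2 = F2 * H) (hH3 : H * F3 = F3 * H) (h32 : F2 * F3 = F3 * F2)
    (I : Submodule R R) (hIE : ∀ u : R, u * E ∈ I) (hIF1 : ∀ u : R, u * F1 ∈ I)
    (hIs : ∀ (c : ℂ), ∀ x ∈ I, c • x ∈ I) (hImul : ∀ x ∈ I, E * x ∈ I)
    (q : ℕ) : ∀ p : ℕ,
    (((p.factorial * q.factorial : ℕ) : ℂ))⁻¹ • (E^p * F3^q)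
      - ∑ A ∈ Finset.range (p+1), gterm H F3 F2 q p A ∈ I := by
  intro p
  induction p with
  | zero =>
    have : (((Nat.factorial 0 * q.factorial : ℕ) : ℂ))⁻¹ • (E^0 * F3^q)
        - ∑ A ∈ Finset.range 1, gterm H F3 F2 q 0 A = 0 := by
      rw [Finset.sum_range_one, gterm, if_pos ⟨by omega, by omega⟩]
      simp [Nat.factorial]
    rw [this]
    exact I.zero_mem
  | succ p ih =>
    have h2 := hImul _ ih
    rw [mul_sub, Finset.mul_sum, mul_smul_comm, ← mul_assoc, ← pow_succ'] at h2
    -- per-term step, summed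
    have h3 : ∑ A ∈ Finset.range (p+1),
        (E * gterm H F3 F2 q p A - ((p+1-3*A : ℕ) : ℂ) • gterm H F3 F2 q (p+1) A
          - ((3*(A+1) : ℕ) : ℂ) • gterm H F3 F2 q (p+1) (A+1)) ∈ I :=
      Submodule.sum_mem I fun A _ =>
        aux_step E H F3 F2 F1 hEF3 hEF2 hEH h12 hH2 hH3 h32 I hIE hIF1 hIs q p A
    rw [Finset.sum_sub_distrib, Finset.sum_sub_distrib] at h3
    -- combine sums equality
    have claim2 : (∑ A ∈ Finset.range (p+1), ((p+1-3*A : ℕ) : ℂ) • gterm H F3 F2 q (p+1) A)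
        + ∑ A ∈ Finset.range (p+1), ((3*(A+1) : ℕ) : ℂ) • gterm H F3 F2 q (p+1) (A+1)
        = ((p:ℂ)+1) • ∑ A ∈ Finset.range (p+2), gterm H F3 F2 q (p+1) A := by
      rw [Finset.smul_sum]
      have e1 : ∑ A ∈ Finset.range (p+2), ((p:ℂ)+1) • gterm H F3 F2 q (p+1) A
          = ∑ A ∈ Finset.range (p+2), (((p+1-3*A : ℕ) : ℂ) • gterm H F3 F2 q (p+1) A
              + ((3*A : ℕ) : ℂ) • gterm H F3 F2 q (p+1) A) := by
        refine Finset.sum_congr rfl fun A _ => ?_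
        by_cases hA : 3*A ≤ p+1
        · rw [← add_smul]
          congr 1
          have h : (p+1-3*A) + 3*A = p+1 := by omega
          rw [← Nat.cast_add, h]
          push_cast
          ring
        · have hz : gterm H F3 F2 q (p+1) A = 0 := by
            rw [gterm, if_neg (by tauto)]
          rw [hz, smul_zero, smul_zero, smul_zero, add_zero]
      rw [e1, Finset.sum_add_distrib]
      congr 1
      · rw [Finset.sum_range_succ
            (fun A => ((p+1-3*A : ℕ) : ℂ) • gterm H F3 F2 q (p+1) A) (p+1),
          show (p+1-3*(p+1) : ℕ) = 0 by omega]
        norm_num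
      · rw [Finset.sum_range_succ'
            (fun A => ((3*A : ℕ) : ℂ) • gterm H F3 F2 q (p+1) A) (p+1)]
        norm_num
    -- now assemble
    have h4 : (((p.factorial * q.factorial : ℕ) : ℂ))⁻¹ • (E^(p+1) * F3^q)
        - ((∑ A ∈ Finset.range (p+1), ((p+1-3*A : ℕ) : ℂ) • gterm H F3 F2 q (p+1) A)
          + ∑ A ∈ Finset.range (p+1), ((3*(A+1) : ℕ) : ℂ) • gterm H F3 F2 q (p+1) (A+1)) ∈ I := by
      have hadd := I.add_mem h2 h3
      convert hadd using 1
      abel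
    have h5 : ((((p+1).factorial * q.factorial : ℕ) : ℂ))⁻¹ • (E^(p+1) * F3^q)
          - ∑ A ∈ Finset.range (p+2), gterm H F3 F2 q (p+1) A
        = ((p:ℂ)+1)⁻¹ • ((((p.factorial * q.factorial : ℕ) : ℂ))⁻¹ • (E^(p+1) * F3^q)
          - ((∑ A ∈ Finset.range (p+1), ((p+1-3*A : ℕ) : ℂ) • gterm H F3 F2 q (p+1) A)
            + ∑ A ∈ Finset.range (p+1), ((3*(A+1) : ℕ) : ℂ) • gterm H F3 F2 q (p+1) (A+1))) := by
      rw [claim2, smul_sub, smul_smul, smul_smul]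
      have hne : ((p:ℂ)+1) ≠ 0 := Nat.cast_add_one_ne_zero p
      rw [inv_mul_cancel₀ hne, one_smul]
      congr 2
      rw [Nat.factorial_succ]
      push_cast
      rw [mul_inv, mul_inv, mul_inv]
      ring
    rw [h5]
    exact hIs _ _ h4

end AuxStmt10

attribute [local instance 100] LieRing.ofAssociativeRing

/-- in U(g), with the G₂-type relations [e,f₃]=f₂, [e,f₂]=f₁, [e,f₁]=f₀,
[f₁,f₂]=6h, h and f₃ commuting with f₂,f₃,h and with each other, [e,h]=[e,f₀]=0,
for all p,q ≥ 0:
e^{(p)} f₃^{(q)} ≡ Σ_{max{0,p-q} ≤ i ≤ ⌊p/3⌋} h^{(i)} f₃^{(q-p+i)} f₂^{(p-3i)}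
modulo the left ideal U(g)(ℂe + ℂf₀ + ℂf₁). -/
theorem stmt10 {L : Type*} [LieRing L] [LieAlgebra ℂ L]
    (e f₃ f₂ f₁ f₀ h : L)
    (h3 : ⁅e, f₃⁆ = f₂) (h2 : ⁅e, f₂⁆ = f₁) (h1 : ⁅e, f₁⁆ = f₀)
    (h0 : ⁅e, f₀⁆ = 0) (heh : ⁅e, h⁆ = 0)
    (hbr : ⁅f₁, f₂⁆ = (6 : ℤ) • h)
    (hc2 : ⁅h, f₂⁆ = 0) (hc3 : ⁅h, f₃⁆ = 0)
    (h32 : ⁅f₃, f₂⁆ = 0)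
    (p q : ℕ) :
    (((p.factorial * q.factorial : ℕ) : ℂ)⁻¹ • ((ι ℂ e) ^ p * (ι ℂ f₃) ^ q)
        - ∑ i ∈ Finset.Icc (p - q) (p / 3),
            ((i.factorial * (q + i - p).factorial * (p - 3 * i).factorial : ℕ) : ℂ)⁻¹ •
              ((ι ℂ h) ^ i * (ι ℂ f₃) ^ (q + i - p) * (ι ℂ f₂) ^ (p - 3 * i)))
      ∈ Submodule.span (UniversalEnvelopingAlgebra ℂ L)
          ({ι ℂ e, ι ℂ f₀, ι ℂ f₁} : Set (UniversalEnvelopingAlgebra ℂ L)) := by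
  set U := UniversalEnvelopingAlgebra ℂ L
  set E : U := ι ℂ e
  set H : U := ι ℂ h
  set F3 : U := ι ℂ f₃
  set F2 : U := ι ℂ f₂
  set F1 : U := ι ℂ f₁
  set F0 : U := ι ℂ f₀
  set I : Submodule U U := Submodule.span U ({E, F0, F1} : Set U) with hI
  -- translate Lie relations
  have lie_eq : ∀ x y : L, (ι ℂ x) * (ι ℂ y) - (ι ℂ y) * (ι ℂ x) = ι ℂ ⁅x, y⁆ := by
    intro x y
    rw [← Ring.lie_def, LieHom.map_lie]
  have hEF3 : E * F3 = F3 * E + F2 := by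
    have := lie_eq e f₃; rw [h3, sub_eq_iff_eq_add] at this; rw [this, add_comm]
  have hEF2 : E * F2 = F2 * E + F1 := by
    have := lie_eq e f₂; rw [h2, sub_eq_iff_eq_add] at this; rw [this, add_comm]
  have hEH : E * H = H * E := by
    have := lie_eq e h; rw [heh, map_zero] at this; exact sub_eq_zero.mp this
  have h12 : F1 * F2 = F2 * F1 + (6:ℂ) • H := by
    have := lie_eq f₁ f₂
    rw [hbr, ← Int.cast_smul_eq_zsmul ℂ, map_smul, sub_eq_iff_eq_add] at this
    rw [this, add_comm]
    norm_cast
  have hH2 : H * F2 = F2 * H := by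
    have := lie_eq h f₂; rw [hc2, map_zero] at this; exact sub_eq_zero.mp this
  have hH3 : H * F3 = F3 * H := by
    have := lie_eq h f₃; rw [hc3, map_zero] at this; exact sub_eq_zero.mp this
  have h32' : F2 * F3 = F3 * F2 := by
    have := lie_eq f₃ f₂; rw [h32, map_zero] at this
    exact (sub_eq_zero.mp this).symm
  -- ideal closure facts
  have hEmem : E ∈ I := Submodule.subset_span (by simp)
  have hF1mem : F1 ∈ I := Submodule.subset_span (by simp)
  have hIE : ∀ u : U, u * E ∈ I := fun u => by
    simpa [smul_eq_mul] using I.smul_mem u hEmem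
  have hIF1 : ∀ u : U, u * F1 ∈ I := fun u => by
    simpa [smul_eq_mul] using I.smul_mem u hF1mem
  have hIs : ∀ (c : ℂ), ∀ x ∈ I, c • x ∈ I := fun c x hx => by
    rw [← algebraMap_smul U c x]
    exact I.smul_mem _ hx
  have hImul : ∀ x ∈ I, E * x ∈ I := fun x hx => by
    simpa [smul_eq_mul] using I.smul_mem E hx
  have main := aux_main E H F3 F2 F1 hEF3 hEF2 hEH h12 hH2 hH3 h32' I hIE hIF1 hIs hImul q p
  -- convert the range sum to the Icc sum
  have hsum : ∑ A ∈ Finset.range (p+1), gterm H F3 F2 q p A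
      = ∑ i ∈ Finset.Icc (p - q) (p / 3),
          ((i.factorial * (q + i - p).factorial * (p - 3 * i).factorial : ℕ) : ℂ)⁻¹ •
            (H ^ i * F3 ^ (q + i - p) * F2 ^ (p - 3 * i)) := by
    have hsub : Finset.Icc (p - q) (p / 3) ⊆ Finset.range (p+1) := by
      intro i hi
      rw [Finset.mem_Icc] at hi
      rw [Finset.mem_range]
      have := Nat.div_le_self p 3
      omega
    rw [← Finset.sum_subset hsub]
    · refine Finset.sum_congr rfl fun i hi => ?_
      rw [Finset.mem_Icc] at hi
      have hg : 3*i ≤ p ∧ p ≤ q + i := by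
        constructor
        · have := (Nat.le_div_iff_mul_le (by norm_num : 0 < 3)).mp hi.2
          omega
        · omega
      rw [gterm, if_pos hg]
    · intro A hA hA'
      rw [Finset.mem_range] at hA
      rw [Finset.mem_Icc] at hA'
      rw [gterm, if_neg]
      rintro ⟨ha, hb⟩
      refine hA' ⟨by omega, ?_⟩
      exact (Nat.le_div_iff_mul_le (by norm_num : 0 < 3)).mpr (by omega)
  rw [hsum] at main
  exact main
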